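/- Let ‖·‖ be a norm on c₀₀ that is permutation-invariant and multiplicative, let p ∈ [1,+∞), and suppose ‖1ⁿ‖ = n^{1/p} for every n ≥ 1. Then for every x ∈ c₀₀ one has ‖x‖ ≤ ‖x‖_p. -/

import Mathlib

/-- Tensor product of finitely supported sequences, regarded as a finitely
supported sequence via a fixed bijection `e : ℕ ≃ ℕ × ℕ`. -/
noncomputable def tensor (e : ℕ ≃ ℕ × ℕ) (x y : ℕ →₀ ℝ) : ℕ →₀ ℝ :=
  Finsupp.onFinset ((x.support ×ˢ y.support).image e.symm)
    (fun n => x (e n).1 * y (e n).2)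
    (fun n h => by
      simp only [Finset.mem_image, Finset.mem_product]
      exact ⟨e n, ⟨Finsupp.mem_support_iff.2 (left_ne_zero_of_mul h),
        Finsupp.mem_support_iff.2 (right_ne_zero_of_mul h)⟩, e.symm_apply_apply n⟩)

/-- The sequence `1ⁿ` consisting of `n` ones followed by zeros. -/
noncomputable def oneVec (n : ℕ) : ℕ →₀ ℝ :=
  Finsupp.indicator (Finset.range n) (fun _ _ => 1)

noncomputable def indFin (S : Finset ℕ) : ℕ →₀ ℝ :=
  Finsupp.indicator S (fun _ _ => 1)

lemma indFin_apply (S : Finset ℕ) (i : ℕ) :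
    indFin S i = if i ∈ S then (1:ℝ) else 0 := by
  classical
  simp [indFin, Finsupp.indicator_apply]

lemma oneVec_apply (n : ℕ) (i : ℕ) :
    oneVec n i = if i < n then (1:ℝ) else 0 := by
  classical
  simp [oneVec, Finsupp.indicator_apply]

lemma perm_oneVec (σ : Equiv.Perm ℕ) (S : Finset ℕ)
    (hσ : ∀ i, σ i ∈ S ↔ i < S.card) :
    Finsupp.equivMapDomain σ (oneVec S.card) = indFin S := by
  ext j
  rw [Finsupp.equivMapDomain_apply, oneVec_apply, indFin_apply]
  have : σ.symm j < S.card ↔ j ∈ S := by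
    rw [← hσ (σ.symm j), Equiv.apply_symm_apply]
  simp [this]

lemma exists_perm_finset (S : Finset ℕ) :
    ∃ σ : Equiv.Perm ℕ, ∀ i, σ i ∈ S ↔ i < S.card := by
  classical
  induction S using Finset.induction_on with
  | empty => exact ⟨1, by simp⟩
  | @insert a S ha ih =>
    obtain ⟨σ, hσ⟩ := ih
    set n := S.card with hn
    have hcard : (insert a S).card = n + 1 := Finset.card_insert_of_notMem ha
    set c := σ.symm a with hc
    have hcn : ¬ c < n := by
      intro h
      have := (hσ c).2 h
      rw [hc, Equiv.apply_symm_apply] at this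
      exact ha this
    refine ⟨σ * (Equiv.swap n c), ?_⟩
    intro i
    rw [hcard]
    by_cases h1 : i = n
    · subst h1
      simp [Equiv.swap_apply_left, hc, Equiv.apply_symm_apply]
    · by_cases h2 : i = c
      · subst h2
        have he : (σ * Equiv.swap n c) c = σ n := by simp [Equiv.swap_apply_right]
        rw [he, Finset.mem_insert]
        have h3 : σ n ≠ a := by
          intro h
          exact h1 (σ.injective (by rw [h, hc, Equiv.apply_symm_apply]))
        have h4 : σ n ∉ S := by
          intro h
          have := (hσ n).1 h; omega
        constructor
        · rintro (h | h)
          · exact absurd h h3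
          · exact absurd h h4
        · intro h
          omega
      · have : (σ * Equiv.swap n c) i = σ i := by
          simp [Equiv.swap_apply_of_ne_of_ne h1 h2]
        rw [this, Finset.mem_insert]
        constructor
        · rintro (h | h)
          · exact absurd (σ.injective (h.trans (by rw [hc, Equiv.apply_symm_apply]))) h2
          · have := (hσ i).1 h; omega
        · intro h
          have : i < n := by omega
          exact Or.inr ((hσ i).2 this)


section
variable (N : (ℕ →₀ ℝ) → ℝ)
  (hadd : ∀ x y, N (x + y) ≤ N x + N y)
  (hsmul : ∀ (c : ℝ) (x), N (c • x) = |c| * N x)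
  (hdef : ∀ x, N x = 0 ↔ x = 0)

include hdef in
lemma N_zero : N 0 = 0 := (hdef 0).2 rfl

include hsmul in
lemma N_neg (x) : N (-x) = N x := by
  have := hsmul (-1) x
  simpa using this

include hadd hsmul hdef in
lemma N_nonneg (x) : 0 ≤ N x := by
  have h0 : N 0 = 0 := (hdef 0).2 rfl
  have := hadd x (-x)
  rw [add_neg_cancel, h0, N_neg N hsmul] at this
  linarith

include hadd hdef in
lemma N_sum_le {α : Type*} (s : Finset α) (f : α → (ℕ →₀ ℝ)) :
    N (∑ i ∈ s, f i) ≤ ∑ i ∈ s, N (f i) := by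
  classical
  induction s using Finset.induction_on with
  | empty => simp [N_zero N hdef]
  | @insert a s ha ih =>
    rw [Finset.sum_insert ha, Finset.sum_insert ha]
    exact le_trans (hadd _ _) (by linarith)

end

section
variable (N : (ℕ →₀ ℝ) → ℝ)
  (hadd : ∀ x y, N (x + y) ≤ N x + N y)
  (hsmul : ∀ (c : ℝ) (x), N (c • x) = |c| * N x)
  (hdef : ∀ x, N x = 0 ↔ x = 0)
  (hperm : ∀ (σ : Equiv.Perm ℕ) (x), N (Finsupp.equivMapDomain σ x) = N x)
  (p : ℝ) (hp : 1 ≤ p)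
  (hone : ∀ n : ℕ, 1 ≤ n → N (oneVec n) = (n : ℝ) ^ (1 / p))

include hperm hone in
lemma N_indFin (S : Finset ℕ) (hS : S.Nonempty) :
    N (indFin S) = (S.card : ℝ) ^ (1 / p) := by
  obtain ⟨σ, hσ⟩ := exists_perm_finset S
  rw [← perm_oneVec σ S hσ, hperm, hone S.card (Finset.card_pos.2 hS)]

include hadd hsmul hdef hperm hp hone in
lemma SLC : ∀ s : ℕ, ∀ t : ℝ, 0 ≤ t → ∀ y : ℕ →₀ ℝ,
    (∀ i, 0 ≤ y i) → (∀ i, y i ≤ t) → y.support.card ≤ s →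
    N y ≤ t * (s : ℝ) ^ (1 / p) := by
  intro s
  induction s with
  | zero =>
    intro t ht y hy0 hyt hcard
    have hy : y = 0 := by
      ext i
      by_contra h
      have : i ∈ y.support := Finsupp.mem_support_iff.2 (by simpa using h)
      have := Finset.card_pos.2 ⟨i, this⟩
      omega
    rw [hy, N_zero N hdef, Nat.cast_zero, Real.zero_rpow (by positivity), mul_zero]
  | succ s ih =>
    intro t ht y hy0 hyt hcard
    have hp0 : (0:ℝ) < 1/p := by positivity
    have hmono : (s:ℝ) ^ (1/p) ≤ ((s+1:ℕ) : ℝ) ^ (1/p) := by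
      apply Real.rpow_le_rpow (by positivity) _ (le_of_lt hp0)
      push_cast; linarith
    by_cases hc : y.support.card ≤ s
    · have h1 := ih t ht y hy0 hyt hc
      calc N y ≤ t * (s:ℝ) ^ (1/p) := h1
        _ ≤ t * ((s+1:ℕ):ℝ) ^ (1/p) := by nlinarith
    · have hcard' : y.support.card = s + 1 := by omega
      have hne : y.support.Nonempty := Finset.card_pos.1 (by omega)
      obtain ⟨i₀, hi₀, hmin⟩ := Finset.exists_min_image y.support y hne
      set S := y.support with hSdef
      set t₀ := y i₀ with ht₀def
      have ht₀pos : 0 < t₀ := lt_of_le_of_ne (hy0 i₀)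
        (fun h => Finsupp.mem_support_iff.1 hi₀ h.symm)
      have ht₀t : t₀ ≤ t := hyt i₀
      set y' := y - t₀ • indFin S with hy'def
      have happ : ∀ i, y' i = y i - t₀ * (if i ∈ S then (1:ℝ) else 0) := by
        intro i
        rw [hy'def, Finsupp.sub_apply, Finsupp.smul_apply, smul_eq_mul, indFin_apply]
      have hnotmem : ∀ i, i ∉ S → y i = 0 := fun i hi =>
        Finsupp.notMem_support_iff.1 hi
      have hy'0 : ∀ i, 0 ≤ y' i := by
        intro i
        rw [happ i]
        by_cases hi : i ∈ S
        · simp only [hi, if_true, mul_one]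
          linarith [hmin i hi]
        · simp only [hi, if_false, mul_zero, sub_zero]
          exact hy0 i
      have hy't : ∀ i, y' i ≤ t - t₀ := by
        intro i
        rw [happ i]
        by_cases hi : i ∈ S
        · simp only [hi, if_true, mul_one]
          linarith [hyt i]
        · simp only [hi, if_false, mul_zero, sub_zero, hnotmem i hi]
          linarith
      have hsupp' : y'.support ⊆ S.erase i₀ := by
        intro i hi
        have hne0 : y' i ≠ 0 := Finsupp.mem_support_iff.1 hi
        have hiS : i ∈ S := by
          by_contra h
          exact hne0 (by rw [happ i]; simp [h, hnotmem i h])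
        refine Finset.mem_erase.2 ⟨?_, hiS⟩
        intro h
        exact hne0 (by rw [happ i, h]; simp [hi₀, ht₀def])
      have hcard'' : y'.support.card ≤ s := by
        have := Finset.card_le_card hsupp'
        rw [Finset.card_erase_of_mem hi₀, hcard'] at this
        omega
      have IH := ih (t - t₀) (by linarith) y' hy'0 hy't hcard''
      have hdecomp : y = t₀ • indFin S + y' := by rw [hy'def]; abel
      have hNind : N (indFin S) = ((s+1:ℕ):ℝ) ^ (1/p) := by
        rw [N_indFin N hperm p hone S hne, hcard']
      calc N y = N (t₀ • indFin S + y') := by rw [← hdecomp]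
        _ ≤ N (t₀ • indFin S) + N y' := hadd _ _
        _ = t₀ * ((s+1:ℕ):ℝ) ^ (1/p) + N y' := by
            rw [hsmul, hNind, abs_of_pos ht₀pos]
        _ ≤ t₀ * ((s+1:ℕ):ℝ) ^ (1/p) + (t - t₀) * (s:ℝ) ^ (1/p) := by linarith
        _ ≤ t * ((s+1:ℕ):ℝ) ^ (1/p) := by nlinarith

end

noncomputable def Sp (p : ℝ) (y : ℕ →₀ ℝ) : ℝ := ∑ i ∈ y.support, |y i| ^ p

lemma Sp_nonneg (p : ℝ) (y : ℕ →₀ ℝ) : 0 ≤ Sp p y :=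
  Finset.sum_nonneg fun i _ => Real.rpow_nonneg (abs_nonneg _) p

section
variable (N : (ℕ →₀ ℝ) → ℝ)
  (hadd : ∀ x y, N (x + y) ≤ N x + N y)
  (hsmul : ∀ (c : ℝ) (x), N (c • x) = |c| * N x)
  (hdef : ∀ x, N x = 0 ↔ x = 0)
  (hperm : ∀ (σ : Equiv.Perm ℕ) (x), N (Finsupp.equivMapDomain σ x) = N x)
  (p : ℝ) (hp : 1 ≤ p)
  (hone : ∀ n : ℕ, 1 ≤ n → N (oneVec n) = (n : ℝ) ^ (1 / p))

include hadd hsmul hdef hperm hp hone in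
lemma logBound_nonneg (y : ℕ →₀ ℝ) (hy0 : ∀ i, 0 ≤ y i) :
    N y ≤ ((Nat.clog 2 y.support.card : ℝ) + 2) * (Sp p y) ^ (1 / p) := by
  classical
  have hppos : (0:ℝ) < p := by linarith
  have hp0 : (0:ℝ) < 1/p := by positivity
  by_cases hy : y = 0
  · rw [hy, N_zero N hdef]
    have : Sp p (0 : ℕ →₀ ℝ) = 0 := by simp [Sp]
    rw [this, Real.zero_rpow (by positivity), mul_zero]
  · -- setup
    set n := y.support.card with hn
    have hne : y.support.Nonempty := Finsupp.support_nonempty_iff.2 hy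
    have hn1 : 1 ≤ n := Finset.card_pos.2 hne
    obtain ⟨imax, himax, hmax⟩ := Finset.exists_max_image y.support y hne
    set v := y imax with hv
    have hvpos : 0 < v := lt_of_le_of_ne (hy0 imax)
      (fun h => Finsupp.mem_support_iff.1 himax h.symm)
    have hyv : ∀ i, y i ≤ v := by
      intro i
      by_cases hi : i ∈ y.support
      · exact hmax i hi
      · rw [Finsupp.notMem_support_iff.1 hi]; exact le_of_lt hvpos
    set J := Nat.clog 2 n with hJ
    set c : ℕ → ℝ := fun j => v / 2 ^ j with hc
    have hcpos : ∀ j, 0 < c j := fun j => by positivity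
    have hcsucc : ∀ j, c j - c (j + 1) = c (j + 1) := by
      intro j
      rw [hc]
      simp only []
      rw [pow_succ]
      field_simp
      ring
    have hcmono : ∀ j, c (j + 1) ≤ c j := fun j => by
      linarith [hcsucc j, hcpos (j + 1)]
    -- capped vectors
    set cap : ℕ → (ℕ →₀ ℝ) := fun j =>
      Finsupp.onFinset y.support (fun i => min (y i) (c j))
        (fun i h => Finsupp.mem_support_iff.2 fun h0 =>
          h (by show min (y i) (c j) = 0
                rw [h0]; exact min_eq_left (le_of_lt (hcpos j)))) with hcap
    have hcap_apply : ∀ j i, cap j i = min (y i) (c j) := fun j i => rfl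
    -- cap 0 = y
    have hcap0 : cap 0 = y := by
      ext i
      rw [hcap_apply]
      exact min_eq_left (by rw [hc]; simpa using hyv i)
    -- Sp bound pieces
    have hSp : 0 ≤ Sp p y := Sp_nonneg p y
    have hSprpow : 0 ≤ (Sp p y) ^ (1/p) := Real.rpow_nonneg hSp _
    -- generic piece bound: a vector with values in [0, c] and support-card m
    -- with m * c^p ≤ Sp p y has N ≤ Sp^{1/p}
    have key : ∀ (z : ℕ →₀ ℝ) (t : ℝ) (m : ℕ), 0 < t → (∀ i, 0 ≤ z i) →
        (∀ i, z i ≤ t) → z.support.card ≤ m → (m : ℝ) * t ^ p ≤ Sp p y →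
        N z ≤ (Sp p y) ^ (1/p) := by
      intro z t m htpos hz0 hzt hzcard hmt
      have h1 : N z ≤ t * (m : ℝ) ^ (1/p) :=
        SLC N hadd hsmul hdef hperm p hp hone m t (le_of_lt htpos) z hz0 hzt hzcard
      have h2 : t * (m:ℝ) ^ (1/p) ≤ (Sp p y) ^ (1/p) := by
        have ha : 0 ≤ t * (m:ℝ) ^ (1/p) := by positivity
        have hap : (t * (m:ℝ) ^ (1/p)) ^ p = t ^ p * (m:ℝ) := by
          rw [Real.mul_rpow (le_of_lt htpos) (Real.rpow_nonneg (Nat.cast_nonneg m) _),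
            ← Real.rpow_mul (Nat.cast_nonneg m), one_div_mul_cancel (ne_of_gt hppos),
            Real.rpow_one]
        have : (t * (m:ℝ) ^ (1/p)) ^ p ≤ Sp p y := by
          rw [hap]; linarith
        calc t * (m:ℝ) ^ (1/p)
            = ((t * (m:ℝ) ^ (1/p)) ^ p) ^ (1/p) := by
              rw [← Real.rpow_mul ha, mul_one_div, div_self (ne_of_gt hppos),
                Real.rpow_one]
          _ ≤ (Sp p y) ^ (1/p) := Real.rpow_le_rpow (by positivity) this (le_of_lt hp0)
      linarith
    -- count of large entries
    have hcount : ∀ j : ℕ,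
        ((y.support.filter (fun i => c j < y i)).card : ℝ) * (c j) ^ p ≤ Sp p y := by
      intro j
      set T := y.support.filter (fun i => c j < y i) with hT
      have h1 : ∀ i ∈ T, (c j) ^ p ≤ |y i| ^ p := by
        intro i hi
        have := (Finset.mem_filter.1 hi).2
        exact Real.rpow_le_rpow (le_of_lt (hcpos j))
          (by rw [abs_of_nonneg (hy0 i)]; linarith) (le_of_lt hppos)
      calc ((T.card : ℝ)) * (c j) ^ p = ∑ _i ∈ T, (c j) ^ p := by
            rw [Finset.sum_const, nsmul_eq_mul]
        _ ≤ ∑ i ∈ T, |y i| ^ p := Finset.sum_le_sum h1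
        _ ≤ Sp p y := Finset.sum_le_sum_of_subset_of_nonneg (Finset.filter_subset _ _)
            (fun i _ _ => Real.rpow_nonneg (abs_nonneg _) p)
    -- bound on each difference piece
    have hpiece : ∀ j : ℕ, N (cap j - cap (j+1)) ≤ (Sp p y) ^ (1/p) := by
      intro j
      set T := y.support.filter (fun i => c (j+1) < y i) with hT
      refine key (cap j - cap (j+1)) (c (j+1)) T.card (hcpos (j+1)) ?_ ?_ ?_ (hcount (j+1))
      · intro i
        rw [Finsupp.sub_apply, hcap_apply, hcap_apply]
        exact sub_nonneg.2 (min_le_min (le_refl _) (hcmono j))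
      · intro i
        rw [Finsupp.sub_apply, hcap_apply, hcap_apply]
        have h := hcsucc j
        rcases le_total (y i) (c (j+1)) with h1 | h1
        · rw [min_eq_left (h1.trans (hcmono j)), min_eq_left h1]
          simp [le_of_lt (hcpos (j+1))]
        · rw [min_eq_right h1]
          have : min (y i) (c j) ≤ c j := min_le_right _ _
          linarith
      · apply Finset.card_le_card
        intro i hi
        have hne0 : (cap j - cap (j+1)) i ≠ 0 := Finsupp.mem_support_iff.1 hi
        rw [Finsupp.sub_apply, hcap_apply, hcap_apply] at hne0
        rw [hT, Finset.mem_filter]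
        constructor
        · by_contra h
          rw [Finsupp.notMem_support_iff.1 h] at hne0
          rw [min_eq_left (le_of_lt (hcpos j)), min_eq_left (le_of_lt (hcpos (j+1)))] at hne0
          simp at hne0
        · by_contra h
          push_neg at h
          rw [min_eq_left (h.trans (hcmono j)), min_eq_left h] at hne0
          simp at hne0
    -- tail bound
    have hvle : v ≤ (Sp p y) ^ (1/p) := by
      have h1 : v ^ p ≤ Sp p y := by
        have h := Finset.single_le_sum
          (f := fun i => |y i| ^ p)
          (fun i _ => Real.rpow_nonneg (abs_nonneg _) p) himax
        simp only [abs_of_nonneg (hy0 imax)] at h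
        exact h
      calc v = (v ^ p) ^ (1/p) := by
            rw [← Real.rpow_mul (le_of_lt hvpos), mul_one_div,
              div_self (ne_of_gt hppos), Real.rpow_one]
        _ ≤ (Sp p y) ^ (1/p) := Real.rpow_le_rpow (by positivity) h1 (le_of_lt hp0)
    have htail : N (cap (J+1)) ≤ (Sp p y) ^ (1/p) := by
      have h1 : N (cap (J+1)) ≤ c (J+1) * (n : ℝ) ^ (1/p) := by
        apply SLC N hadd hsmul hdef hperm p hp hone n (c (J+1)) (le_of_lt (hcpos _))
        · intro i; rw [hcap_apply]; exact le_min (hy0 i) (le_of_lt (hcpos _))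
        · intro i; rw [hcap_apply]; exact min_le_right _ _
        · exact Finset.card_le_card (Finsupp.support_onFinset_subset)
      have h2 : (n:ℝ) ^ (1/p) ≤ (n:ℝ) := by
        have : (n:ℝ) ^ (1/p) ≤ (n:ℝ) ^ (1:ℝ) :=
          Real.rpow_le_rpow_of_exponent_le (by exact_mod_cast hn1) (by
            rw [div_le_one hppos]; linarith)
        rwa [Real.rpow_one] at this
      have h3 : (n:ℝ) ≤ 2 ^ J := by
        have := Nat.le_pow_clog (by norm_num : 1 < 2) n
        rw [hJ]
        exact_mod_cast this
      have h4 : c (J+1) * (n : ℝ) ^ (1/p) ≤ v := by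
        have h5 : (n:ℝ) ^ (1/p) ≤ 2 ^ J := le_trans h2 h3
        have h6 : (0:ℝ) < 2 ^ (J+1) := by positivity
        rw [hc]
        simp only []
        rw [div_mul_eq_mul_div, div_le_iff₀ h6]
        have : (0:ℝ) ≤ (n:ℝ) ^ (1/p) := by positivity
        calc v * (n:ℝ)^(1/p) ≤ v * 2 ^ J := by nlinarith
          _ ≤ v * 2 ^ (J+1) := by
              have : (2:ℝ)^J ≤ 2^(J+1) := by
                apply pow_le_pow_right₀ (by norm_num); omega
              nlinarith
      linarith
    -- assemble
    have hdecomp : y = (∑ j ∈ Finset.range (J+1), (cap j - cap (j+1))) + cap (J+1) := by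
      rw [Finset.sum_range_sub' (fun j => cap j), hcap0]
      abel
    calc N y = N ((∑ j ∈ Finset.range (J+1), (cap j - cap (j+1))) + cap (J+1)) := by
          rw [← hdecomp]
      _ ≤ N (∑ j ∈ Finset.range (J+1), (cap j - cap (j+1))) + N (cap (J+1)) := hadd _ _
      _ ≤ (∑ j ∈ Finset.range (J+1), N (cap j - cap (j+1))) + N (cap (J+1)) := by
          linarith [N_sum_le N hadd hdef (Finset.range (J+1)) (fun j => cap j - cap (j+1))]
      _ ≤ (∑ _j ∈ Finset.range (J+1), (Sp p y) ^ (1/p)) + (Sp p y) ^ (1/p) := by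
          have := Finset.sum_le_sum (fun j (_ : j ∈ Finset.range (J+1)) => hpiece j)
          linarith
      _ = ((J : ℝ) + 2) * (Sp p y) ^ (1/p) := by
          rw [Finset.sum_const, Finset.card_range, nsmul_eq_mul]
          push_cast
          ring
      _ = ((Nat.clog 2 y.support.card : ℝ) + 2) * (Sp p y) ^ (1/p) := by rw [hJ, hn]

end

noncomputable def pPart (y : ℕ →₀ ℝ) : ℕ →₀ ℝ :=
  Finsupp.onFinset y.support (fun i => max (y i) 0)
    (fun i h => Finsupp.mem_support_iff.2 (fun h0 => h (by
      show max (y i) 0 = 0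
      rw [h0]; simp)))

lemma pPart_apply (y : ℕ →₀ ℝ) (i : ℕ) : pPart y i = max (y i) 0 := rfl

lemma pPart_sub (y : ℕ →₀ ℝ) : y = pPart y - pPart (-y) := by
  ext i
  rw [Finsupp.sub_apply, pPart_apply, pPart_apply, Finsupp.neg_apply]
  rcases le_total (y i) 0 with h | h
  · rw [max_eq_right h, max_eq_left (by linarith)]; ring
  · rw [max_eq_left h, max_eq_right (by linarith)]; ring

section
variable (N : (ℕ →₀ ℝ) → ℝ)
  (hadd : ∀ x y, N (x + y) ≤ N x + N y)
  (hsmul : ∀ (c : ℝ) (x), N (c • x) = |c| * N x)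
  (hdef : ∀ x, N x = 0 ↔ x = 0)
  (hperm : ∀ (σ : Equiv.Perm ℕ) (x), N (Finsupp.equivMapDomain σ x) = N x)
  (p : ℝ) (hp : 1 ≤ p)
  (hone : ∀ n : ℕ, 1 ≤ n → N (oneVec n) = (n : ℝ) ^ (1 / p))

include hadd hsmul hdef hperm hp hone in
lemma logBound (y : ℕ →₀ ℝ) :
    N y ≤ 2 * ((Nat.clog 2 y.support.card : ℝ) + 2) * (Sp p y) ^ (1 / p) := by
  classical
  have hppos : (0:ℝ) < p := by linarith
  have habs : ∀ z : ℕ →₀ ℝ, z.support ⊆ y.support → (∀ i, |z i| ≤ |y i|) →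
      N z ≤ ((Nat.clog 2 y.support.card : ℝ) + 2) * (Sp p y) ^ (1/p) →
      True := fun _ _ _ _ => trivial
  -- bound for one signed part
  have hpart : ∀ z : ℕ →₀ ℝ, (∀ i, 0 ≤ z i) → z.support ⊆ y.support →
      (∀ i, |z i| ≤ |y i|) →
      N z ≤ ((Nat.clog 2 y.support.card : ℝ) + 2) * (Sp p y) ^ (1/p) := by
    intro z hz0 hsub habs
    have h1 := logBound_nonneg N hadd hsmul hdef hperm p hp hone z hz0
    have hclog : (Nat.clog 2 z.support.card : ℝ) ≤ (Nat.clog 2 y.support.card : ℝ) := by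
      exact_mod_cast Nat.clog_mono_right 2 (Finset.card_le_card hsub)
    have hSp : Sp p z ≤ Sp p y := by
      calc Sp p z = ∑ i ∈ z.support, |z i| ^ p := rfl
        _ ≤ ∑ i ∈ z.support, |y i| ^ p := Finset.sum_le_sum (fun i _ =>
            Real.rpow_le_rpow (abs_nonneg _) (habs i) (le_of_lt hppos))
        _ ≤ ∑ i ∈ y.support, |y i| ^ p := Finset.sum_le_sum_of_subset_of_nonneg hsub
            (fun i _ _ => Real.rpow_nonneg (abs_nonneg _) p)
    have hSpr : (Sp p z) ^ (1/p) ≤ (Sp p y) ^ (1/p) :=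
      Real.rpow_le_rpow (Sp_nonneg p z) hSp (by positivity)
    have h2 : (0:ℝ) ≤ (Sp p z) ^ (1/p) := Real.rpow_nonneg (Sp_nonneg p z) _
    have h3 : (0:ℝ) ≤ (Nat.clog 2 z.support.card : ℝ) + 2 := by positivity
    calc N z ≤ ((Nat.clog 2 z.support.card : ℝ) + 2) * (Sp p z) ^ (1/p) := h1
      _ ≤ ((Nat.clog 2 y.support.card : ℝ) + 2) * (Sp p y) ^ (1/p) := by nlinarith
  have hP := hpart (pPart y) (fun i => le_max_right _ _)
    (fun i hi => by
      have := Finsupp.mem_support_iff.1 hi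
      rw [pPart_apply] at this
      exact Finsupp.mem_support_iff.2 (fun h0 => this (by rw [h0]; simp)))
    (fun i => by
      rw [pPart_apply]
      rcases le_total (y i) 0 with h | h
      · rw [max_eq_right h]; simp [abs_nonneg]
      · rw [max_eq_left h])
  have hQ := hpart (pPart (-y)) (fun i => le_max_right _ _)
    (fun i hi => by
      have := Finsupp.mem_support_iff.1 hi
      rw [pPart_apply, Finsupp.neg_apply] at this
      exact Finsupp.mem_support_iff.2 (fun h0 => this (by rw [h0]; simp)))
    (fun i => by
      rw [pPart_apply, Finsupp.neg_apply]
      rcases le_total (y i) 0 with h | h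
      · rw [abs_of_nonpos h, max_eq_left (by linarith), abs_of_nonneg (by linarith : (0:ℝ) ≤ -y i)]
      · rw [max_eq_right (by linarith)]; simp [abs_nonneg])
  have hdecomp : y = pPart y + (-(pPart (-y))) := by
    rw [← sub_eq_add_neg]; exact pPart_sub y
  calc N y = N (pPart y + (-(pPart (-y)))) := by rw [← hdecomp]
    _ ≤ N (pPart y) + N (-(pPart (-y))) := hadd _ _
    _ = N (pPart y) + N (pPart (-y)) := by rw [N_neg N hsmul]
    _ ≤ 2 * ((Nat.clog 2 y.support.card : ℝ) + 2) * (Sp p y) ^ (1/p) := by linarith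

end

lemma tensor_apply (e : ℕ ≃ ℕ × ℕ) (x y : ℕ →₀ ℝ) (k : ℕ) :
    tensor e x y k = x (e k).1 * y (e k).2 := rfl

lemma tensor_card (e : ℕ ≃ ℕ × ℕ) (x y : ℕ →₀ ℝ) :
    (tensor e x y).support.card ≤ x.support.card * y.support.card := by
  calc (tensor e x y).support.card
      ≤ ((x.support ×ˢ y.support).image e.symm).card :=
        Finset.card_le_card Finsupp.support_onFinset_subset
    _ ≤ (x.support ×ˢ y.support).card := Finset.card_image_le
    _ = x.support.card * y.support.card := Finset.card_product _ _

lemma Sp_tensor (e : ℕ ≃ ℕ × ℕ) (p : ℝ) (hp : p ≠ 0) (x y : ℕ →₀ ℝ) :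
    Sp p (tensor e x y) = Sp p x * Sp p y := by
  classical
  have hsub : (tensor e x y).support ⊆ (x.support ×ˢ y.support).image e.symm :=
    Finsupp.support_onFinset_subset
  rw [Sp]
  rw [Finset.sum_subset hsub (fun k _ hk => by
    rw [Finsupp.notMem_support_iff.1 hk, abs_zero, Real.zero_rpow hp])]
  rw [Finset.sum_image (fun a _ b _ h => e.symm.injective h)]
  have : ∀ a ∈ x.support ×ˢ y.support,
      |(tensor e x y) (e.symm a)| ^ p = |x a.1| ^ p * |y a.2| ^ p := by
    intro a _
    rw [tensor_apply, Equiv.apply_symm_apply, abs_mul,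
      Real.mul_rpow (abs_nonneg _) (abs_nonneg _)]
  rw [Finset.sum_congr rfl this, Finset.sum_product]
  rw [Sp, Sp, Finset.sum_mul_sum]

noncomputable def Tpow (e : ℕ ≃ ℕ × ℕ) (x : ℕ →₀ ℝ) : ℕ → (ℕ →₀ ℝ)
  | 0 => oneVec 1
  | k + 1 => tensor e x (Tpow e x k)

lemma oneVec_one_support : (oneVec 1).support = {0} := by
  ext i
  rw [Finsupp.mem_support_iff, oneVec_apply]
  constructor
  · intro h
    by_contra hi
    simp only [Finset.mem_singleton] at hi
    rw [if_neg (by omega)] at h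
    exact h rfl
  · intro h
    simp only [Finset.mem_singleton] at h
    subst h
    rw [if_pos (by omega)]
    norm_num

lemma Sp_oneVec_one (p : ℝ) : Sp p (oneVec 1) = 1 := by
  rw [Sp, oneVec_one_support, Finset.sum_singleton, oneVec_apply]
  norm_num

lemma Tpow_card (e : ℕ ≃ ℕ × ℕ) (x : ℕ →₀ ℝ) (k : ℕ) :
    (Tpow e x k).support.card ≤ x.support.card ^ k := by
  induction k with
  | zero => rw [Tpow, oneVec_one_support]; simp
  | succ k ih =>
    calc (Tpow e x (k+1)).support.card
        ≤ x.support.card * (Tpow e x k).support.card := tensor_card e x _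
      _ ≤ x.support.card * x.support.card ^ k := Nat.mul_le_mul_left _ ih
      _ = x.support.card ^ (k+1) := by ring

lemma Sp_Tpow (e : ℕ ≃ ℕ × ℕ) (p : ℝ) (hp : p ≠ 0) (x : ℕ →₀ ℝ) (k : ℕ) :
    Sp p (Tpow e x k) = (Sp p x) ^ k := by
  induction k with
  | zero => rw [Tpow, Sp_oneVec_one, pow_zero]
  | succ k ih => rw [Tpow, Sp_tensor e p hp, ih, pow_succ]; ring


/-- Upper bound: if `‖1ⁿ‖ = n^(1/p)` for every `n ≥ 1`, then `‖x‖ ≤ ‖x‖_p`. -/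
theorem lp_upper_bound
    (e : ℕ ≃ ℕ × ℕ) (N : (ℕ →₀ ℝ) → ℝ)
    (hadd : ∀ x y, N (x + y) ≤ N x + N y)
    (hsmul : ∀ (c : ℝ) (x), N (c • x) = |c| * N x)
    (hdef : ∀ x, N x = 0 ↔ x = 0)
    (hperm : ∀ (σ : Equiv.Perm ℕ) (x), N (Finsupp.equivMapDomain σ x) = N x)
    (hmul : ∀ x y, N (tensor e x y) = N x * N y)
    (p : ℝ) (hp : 1 ≤ p)
    (hone : ∀ n : ℕ, 1 ≤ n → N (oneVec n) = (n : ℝ) ^ (1 / p)) :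
    ∀ x : ℕ →₀ ℝ, N x ≤ (∑ i ∈ x.support, |x i| ^ p) ^ (1 / p) := by
  intro x
  classical
  show N x ≤ (Sp p x) ^ (1 / p)
  have hppos : (0:ℝ) < p := by linarith
  have honeone : N (oneVec 1) = 1 := by
    have := hone 1 le_rfl
    rwa [Nat.cast_one, Real.one_rpow] at this
  by_cases hx : x = 0
  · rw [hx, N_zero N hdef]
    have : Sp p (0 : ℕ →₀ ℝ) = 0 := by simp [Sp]
    rw [this, Real.zero_rpow (by positivity)]
  · have hne : x.support.Nonempty := Finsupp.support_nonempty_iff.2 hx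
    obtain ⟨i₀, hi₀⟩ := hne
    have hSpos : 0 < Sp p x := Finset.sum_pos'
      (fun i _ => Real.rpow_nonneg (abs_nonneg _) p)
      ⟨i₀, hi₀, Real.rpow_pos_of_pos (abs_pos.2 (Finsupp.mem_support_iff.1 hi₀)) p⟩
    set B := (Sp p x) ^ (1/p) with hBdef
    have hB : 0 < B := Real.rpow_pos_of_pos hSpos _
    have hNT : ∀ k, N (Tpow e x k) = (N x) ^ k := by
      intro k
      induction k with
      | zero => rw [Tpow, honeone, pow_zero]
      | succ k ih => rw [Tpow, hmul, ih, pow_succ]; ring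
    set n := x.support.card with hn
    have hn1 : 1 ≤ n := Finset.card_pos.2 ⟨i₀, hi₀⟩
    set M : ℝ := 2 * ((Nat.clog 2 n : ℝ) + 2) with hM
    have hMpos : 0 < M := by positivity
    have hkey : ∀ k : ℕ, 1 ≤ k → (N x) ^ k ≤ (M * k) * B ^ k := by
      intro k hk
      have h1 := logBound N hadd hsmul hdef hperm p hp hone (Tpow e x k)
      have hcard : (Tpow e x k).support.card ≤ n ^ k := Tpow_card e x k
      have hclog : Nat.clog 2 ((Tpow e x k).support.card) ≤ k * Nat.clog 2 n := by
        have h2 : (Tpow e x k).support.card ≤ 2 ^ (k * Nat.clog 2 n) := by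
          refine le_trans hcard ?_
          calc n ^ k ≤ (2 ^ Nat.clog 2 n) ^ k :=
                Nat.pow_le_pow_left (Nat.le_pow_clog (by norm_num) n) k
            _ = 2 ^ (k * Nat.clog 2 n) := by rw [← pow_mul, mul_comm]
        exact (Nat.clog_le_iff_le_pow (by norm_num)).2 h2
      have hBk : (Sp p (Tpow e x k)) ^ (1/p) = B ^ k := by
        rw [Sp_Tpow e p (ne_of_gt hppos) x k, hBdef,
          ← Real.rpow_natCast (Sp p x) k, ← Real.rpow_mul (le_of_lt hSpos),
          ← Real.rpow_natCast ((Sp p x) ^ (1/p)) k, ← Real.rpow_mul (le_of_lt hSpos)]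
        ring_nf
      have h3 : 2 * ((Nat.clog 2 ((Tpow e x k).support.card) : ℝ) + 2) ≤ M * k := by
        have h4 : (Nat.clog 2 ((Tpow e x k).support.card) : ℝ) ≤ (k : ℝ) * (Nat.clog 2 n : ℝ) := by
          exact_mod_cast hclog
        have h5 : (1:ℝ) ≤ (k:ℝ) := by exact_mod_cast hk
        have h6 : (0:ℝ) ≤ (Nat.clog 2 n : ℝ) := Nat.cast_nonneg _
        rw [hM]
        nlinarith
      have h7 : (0:ℝ) ≤ (Sp p (Tpow e x k)) ^ (1/p) :=
        Real.rpow_nonneg (Sp_nonneg _ _) _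
      calc (N x) ^ k = N (Tpow e x k) := (hNT k).symm
        _ ≤ 2 * ((Nat.clog 2 ((Tpow e x k).support.card) : ℝ) + 2)
            * (Sp p (Tpow e x k)) ^ (1/p) := h1
        _ ≤ (M * k) * (Sp p (Tpow e x k)) ^ (1/p) := by nlinarith
        _ = (M * k) * B ^ k := by rw [hBk]
    by_contra hcon
    push_neg at hcon
    have hr1 : 1 < N x / B := (one_lt_div hB).2 hcon
    set r := N x / B with hr
    have hrk : ∀ k : ℕ, 1 ≤ k → r ^ k ≤ M * k := by
      intro k hk
      rw [hr, div_pow, div_le_iff₀ (pow_pos hB k)]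
      exact hkey k hk
    set s := Real.sqrt r with hs
    have hs1 : 1 < s := by
      rw [hs, show (1:ℝ) = Real.sqrt 1 by simp]
      exact Real.sqrt_lt_sqrt (by norm_num) hr1
    have hss : s ^ 2 = r := Real.sq_sqrt (by linarith)
    have hquad : ∀ k : ℕ, 1 ≤ k → (k:ℝ) ^ 2 * (s - 1) ^ 2 ≤ M * k := by
      intro k hk
      have hb : 1 + (k:ℝ) * (s - 1) ≤ s ^ k := by
        have := one_add_mul_le_pow (a := s - 1) (by linarith) k
        simpa using this
      have h0 : 0 ≤ (k:ℝ) * (s - 1) :=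
        mul_nonneg (Nat.cast_nonneg k) (by linarith)
      have hsq : ((k:ℝ) * (s - 1)) ^ 2 ≤ (s ^ k) ^ 2 := by nlinarith
      have hsk : (s ^ k) ^ 2 = r ^ k := by
        rw [← pow_mul, mul_comm, pow_mul, hss]
      have := hrk k hk
      nlinarith
    have hd : 0 < (s - 1) ^ 2 := by
      have : s - 1 ≠ 0 := by intro h; rw [sub_eq_zero] at h; exact absurd h.symm (ne_of_lt hs1)
      positivity
    obtain ⟨k, hk⟩ := exists_nat_gt (M / (s - 1) ^ 2)
    have hk'1 : 1 ≤ max k 1 := le_max_right _ _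
    have hk'big : M / (s - 1) ^ 2 < ((max k 1 : ℕ) : ℝ) :=
      lt_of_lt_of_le hk (Nat.cast_le.2 (le_max_left _ _))
    have hq := hquad (max k 1) hk'1
    have hkpos : (0:ℝ) < ((max k 1 : ℕ) : ℝ) := by
      have : (1:ℝ) ≤ ((max k 1 : ℕ) : ℝ) := by exact_mod_cast hk'1
      linarith
    have h5 : ((max k 1 : ℕ) : ℝ) * (s - 1) ^ 2 ≤ M := by nlinarith
    have h6 : ((max k 1 : ℕ) : ℝ) ≤ M / (s - 1) ^ 2 := (le_div_iff₀ hd).2 h5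
    linarith
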